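/- Let p, q ∈ ℤ³ be fixed. Define unitary operators g(n) on ℓ²(ℤ)-valued L² functions of a ∈ ℝ³ by (g(n)ψ)_N(a) = exp(2πi N · det[a, p, n]) · ψ_{N − q·n}(a − n). Then g(n) g(m) = C'(a; n, m) · g(n+m) where C'(a; n, m) = exp(−2πi (q·m) det[a, p, n]), i.e., the g(n) form a projective representation of ℤ³ with multiplier C'. -/
import Mathlib


/- STATEMENT 5: For fixed `p, q ∈ ℤ³`, the operators
`(g(n)ψ)_N(a) = exp(2πi N · det[a, p, n]) · ψ_{N − q·n}(a − n)` on (ℓ²(ℤ)-valued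
functions of) `a ∈ ℝ³` form a projective representation of ℤ³ with multiplier
`C'(a; n, m) = exp(−2πi (q·m) det[a, p, n])`:  `g(n) g(m) = C'(a; n, m) g(n+m)`.
(The product `g(n)g(m)` means `ψ ↦ g(m)(g(n)ψ)` applied first by `g(n)`, which is
the convention under which the stated multiplier arises.) -/

/-- `det[a, p, n]`, the 3×3 determinant with rows `a ∈ ℝ³`, `p, n ∈ ℤ³`. -/
noncomputable def det3 (a : Fin 3 → ℝ) (p n : Fin 3 → ℤ) : ℝ :=
  a 0 * ((p 1 : ℝ) * (n 2 : ℝ) - (p 2 : ℝ) * (n 1 : ℝ)) +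
  a 1 * ((p 2 : ℝ) * (n 0 : ℝ) - (p 0 : ℝ) * (n 2 : ℝ)) +
  a 2 * ((p 0 : ℝ) * (n 1 : ℝ) - (p 1 : ℝ) * (n 0 : ℝ))

/-- Dot product on ℤ³. -/
def dotZ (q n : Fin 3 → ℤ) : ℤ := ∑ i, q i * n i

/-- The operator `g(n)` acting on Fock-component functions `ψ : ℝ³ → ℤ → ℂ`,
`(g(n)ψ)_N(a) = e^{2πi N det[a,p,n]} ψ_{N − q·n}(a − n)`. -/
noncomputable def gOp (p q n : Fin 3 → ℤ) (ψ : (Fin 3 → ℝ) → ℤ → ℂ) :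
    (Fin 3 → ℝ) → ℤ → ℂ :=
  fun a N => Complex.exp (2 * Real.pi * Complex.I * (N : ℝ) * det3 a p n) *
    ψ (fun i => a i - (n i : ℝ)) (N - dotZ q n)

theorem stmt5 (p q : Fin 3 → ℤ) (n m : Fin 3 → ℤ)
    (ψ : (Fin 3 → ℝ) → ℤ → ℂ) (a : Fin 3 → ℝ) (N : ℤ) :
    gOp p q m (gOp p q n ψ) a N
      = Complex.exp (-(2 * Real.pi * Complex.I) * ((dotZ q m : ℝ) * det3 a p n)) *
        gOp p q (n + m) ψ a N := by
  classical
  simp only [gOp]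
  have h1 : (fun i => (a i - (m i:ℝ)) - (n i:ℝ)) = (fun i => a i - (((n+m) i : ℤ):ℝ)) := by
    funext i; simp [Pi.add_apply]; push_cast; ring
  have h2 : N - dotZ q m - dotZ q n = N - dotZ q (n+m) := by
    simp [dotZ, Finset.sum_add_distrib, mul_add]; ring
  rw [h1, h2, ← mul_assoc, ← Complex.exp_add, ← mul_assoc, ← Complex.exp_add]
  congr 1
  have hsum : det3 a p (n+m) = det3 a p n + det3 a p m := by
    simp [det3, Pi.add_apply]; push_cast; ring
  have hd : det3 (fun i => a i - (m i:ℝ)) p n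
      = det3 a p n - ((m 0 * (p 1 * n 2 - p 2 * n 1) + m 1 * (p 2 * n 0 - p 0 * n 2)
        + m 2 * (p 0 * n 1 - p 1 * n 0) : ℤ) : ℝ) := by
    simp [det3]; push_cast; ring
  set Dm : ℤ := m 0 * (p 1 * n 2 - p 2 * n 1) + m 1 * (p 2 * n 0 - p 0 * n 2)
        + m 2 * (p 0 * n 1 - p 1 * n 0) with hDm
  have key : 2 * (Real.pi:ℂ) * Complex.I * ((N:ℝ):ℂ) * (det3 a p m : ℝ)
      + 2 * (Real.pi:ℂ) * Complex.I * (((N - dotZ q m : ℤ):ℝ):ℂ)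
          * (det3 (fun i => a i - (m i:ℝ)) p n : ℝ)
      = (-(2 * (Real.pi:ℂ) * Complex.I) * (((dotZ q m : ℤ):ℝ) * (det3 a p n : ℝ))
        + 2 * (Real.pi:ℂ) * Complex.I * ((N:ℝ):ℂ) * (det3 a p (n+m) : ℝ))
        + ((N - dotZ q m) * (-Dm) : ℤ) * (2 * (Real.pi:ℂ) * Complex.I) := by
    rw [hd, hsum]; push_cast; ring
  rw [key, Complex.exp_add, Complex.exp_int_mul_two_pi_mul_I, mul_one]
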